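/- Let Q(x) = ∫ₓ^∞ (1/√(2π)) e^{−t²/2} dt, fix ω̂ ∈ ℝ, and set a = max{ e^{−ω̂²/2} / (√(2π) Q(ω̂)), ω̂ } and b = (1/(√(2π) a)) · e^{aω̂ − ω̂²/2}. Define g(ω) = Q(ω) − b e^{−aω} − (Q(ω̂) − b e^{−aω̂}). Then g is differentiable with g′(ω) = −(1/√(2π)) e^{−ω²/2} + a b e^{−aω}, and g′(ω) ≥ 0 if and only if (ω − ω̂)(ω − (2a − ω̂)) ≥ 0; since a ≥ ω̂, the two roots satisfy ω̂ ≤ 2a − ω̂, so g is increasing on (−∞, ω̂], decreasing on [ω̂, 2a − ω̂], and increasing on [2a − ω̂, ∞). -/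

import Mathlib

/-- The Gaussian Q-function `Q(x) = ∫ₓ^∞ (1/√(2π)) e^{−t²/2} dt`. -/
noncomputable def gaussianQ (x : ℝ) : ℝ :=
  ∫ t in Set.Ioi x, (Real.sqrt (2 * Real.pi))⁻¹ * Real.exp (-t ^ 2 / 2)

/-- `a(u) = max{ e^{−u²/2} / (√(2π) Q(u)), u }`. -/
noncomputable def aQ (u : ℝ) : ℝ :=
  max (Real.exp (-u ^ 2 / 2) / (Real.sqrt (2 * Real.pi) * gaussianQ u)) u

/-- `b(u) = (1/(√(2π) a(u))) · e^{a(u)·u − u²/2}`. -/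
noncomputable def bQ (u : ℝ) : ℝ :=
  (Real.sqrt (2 * Real.pi) * aQ u)⁻¹ * Real.exp (aQ u * u - u ^ 2 / 2)

/-- `c(u) = Q(u) − b(u) e^{−a(u)·u}`. -/
noncomputable def cQ (u : ℝ) : ℝ := gaussianQ u - bQ u * Real.exp (-aQ u * u)

namespace Stmt6Aux

open Real MeasureTheory Set

noncomputable def f (t : ℝ) : ℝ := (Real.sqrt (2 * Real.pi))⁻¹ * Real.exp (-t ^ 2 / 2)

lemma f_pos (t : ℝ) : 0 < f t := by
  have h2π : 0 < Real.sqrt (2 * Real.pi) := Real.sqrt_pos.mpr (by positivity)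
  exact mul_pos (inv_pos.mpr h2π) (Real.exp_pos _)

lemma f_cont : Continuous f := by
  unfold f; continuity

lemma f_integrable : Integrable f := by
  have h : Integrable (fun t : ℝ => Real.exp (-(1/2 : ℝ) * t ^ 2)) :=
    integrable_exp_neg_mul_sq (by norm_num)
  have h' : Integrable (fun t : ℝ => Real.exp (-t ^ 2 / 2)) := by
    convert h using 2 with t; ring_nf
  exact h'.const_mul _

lemma gaussianQ_eq' (x : ℝ) : gaussianQ x = (∫ t, f t) - ∫ t in Iic x, f t := by
  have := intervalIntegral.integral_Iic_add_Ioi (b := x)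
    (f_integrable.integrableOn) (f_integrable.integrableOn)
  unfold gaussianQ; unfold f at this ⊢; linarith

lemma gaussianQ_eq (x : ℝ) : gaussianQ x = gaussianQ 0 - ∫ t in (0:ℝ)..x, f t := by
  rw [gaussianQ_eq' x, gaussianQ_eq' 0,
    ← intervalIntegral.integral_Iic_sub_Iic f_integrable.integrableOn f_integrable.integrableOn]
  ring

lemma gaussianQ_hasDerivAt (x : ℝ) : HasDerivAt gaussianQ (-f x) x := by
  have hd : HasDerivAt (fun u => ∫ t in (0:ℝ)..u, f t) (f x) x :=
    intervalIntegral.integral_hasDerivAt_right f_integrable.intervalIntegrable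
      f_cont.aestronglyMeasurable.stronglyMeasurableAtFilter f_cont.continuousAt
  have := (hd.const_sub (gaussianQ 0))
  have heq : (fun u => gaussianQ 0 - ∫ t in (0:ℝ)..u, f t) = gaussianQ := by
    funext u; rw [gaussianQ_eq u]
  rwa [heq] at this

lemma gaussianQ_pos (x : ℝ) : 0 < gaussianQ x := by
  show 0 < ∫ t in Ioi x, f t
  rw [setIntegral_pos_iff_support_of_nonneg_ae
    (Filter.Eventually.of_forall fun t => (f_pos t).le) f_integrable.integrableOn]
  have : Function.support f = univ := by
    ext t; simp [Function.mem_support, (f_pos t).ne']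
  rw [this, univ_inter]
  simp

lemma aQ_pos (u : ℝ) : 0 < aQ u := by
  have h2π : 0 < Real.sqrt (2 * Real.pi) := Real.sqrt_pos.mpr (by positivity)
  have : 0 < Real.exp (-u ^ 2 / 2) / (Real.sqrt (2 * Real.pi) * gaussianQ u) :=
    div_pos (Real.exp_pos _) (mul_pos h2π (gaussianQ_pos u))
  exact lt_of_lt_of_le this (le_max_left _ _)

lemma ab_eq (u : ℝ) :
    aQ u * bQ u = (Real.sqrt (2 * Real.pi))⁻¹ * Real.exp (aQ u * u - u ^ 2 / 2) := by
  have h2π : 0 < Real.sqrt (2 * Real.pi) := Real.sqrt_pos.mpr (by positivity)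
  have ha := aQ_pos u
  unfold bQ
  field_simp

end Stmt6Aux

open Stmt6Aux Real Set in
theorem statement6 (w0 : ℝ) :
    (∀ ω : ℝ,
      HasDerivAt
        (fun ω => gaussianQ ω - bQ w0 * Real.exp (-aQ w0 * ω) -
          (gaussianQ w0 - bQ w0 * Real.exp (-aQ w0 * w0)))
        (-(Real.sqrt (2 * Real.pi))⁻¹ * Real.exp (-ω ^ 2 / 2) +
          aQ w0 * bQ w0 * Real.exp (-aQ w0 * ω)) ω) ∧
    (∀ ω : ℝ,
      0 ≤ -(Real.sqrt (2 * Real.pi))⁻¹ * Real.exp (-ω ^ 2 / 2) +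
          aQ w0 * bQ w0 * Real.exp (-aQ w0 * ω) ↔
      0 ≤ (ω - w0) * (ω - (2 * aQ w0 - w0))) ∧
    w0 ≤ aQ w0 ∧ w0 ≤ 2 * aQ w0 - w0 ∧
    MonotoneOn
      (fun ω => gaussianQ ω - bQ w0 * Real.exp (-aQ w0 * ω) -
        (gaussianQ w0 - bQ w0 * Real.exp (-aQ w0 * w0))) (Set.Iic w0) ∧
    AntitoneOn
      (fun ω => gaussianQ ω - bQ w0 * Real.exp (-aQ w0 * ω) -
        (gaussianQ w0 - bQ w0 * Real.exp (-aQ w0 * w0))) (Set.Icc w0 (2 * aQ w0 - w0)) ∧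
    MonotoneOn
      (fun ω => gaussianQ ω - bQ w0 * Real.exp (-aQ w0 * ω) -
        (gaussianQ w0 - bQ w0 * Real.exp (-aQ w0 * w0))) (Set.Ici (2 * aQ w0 - w0)) := by
  set a := aQ w0 with ha_def
  set b := bQ w0 with hb_def
  set g := fun ω => gaussianQ ω - b * Real.exp (-a * ω) -
    (gaussianQ w0 - b * Real.exp (-a * w0)) with hg_def
  set g' := fun ω : ℝ => -(Real.sqrt (2 * Real.pi))⁻¹ * Real.exp (-ω ^ 2 / 2) +
    a * b * Real.exp (-a * ω) with hg'_def
  have h2π : 0 < Real.sqrt (2 * Real.pi) := Real.sqrt_pos.mpr (by positivity)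
  have ha : 0 < a := aQ_pos w0
  have haw : w0 ≤ a := le_max_right _ _
  have hderiv : ∀ ω : ℝ, HasDerivAt g (g' ω) ω := by
    intro ω
    have h1 : HasDerivAt gaussianQ (-f ω) ω := gaussianQ_hasDerivAt ω
    have h2 : HasDerivAt (fun ω : ℝ => b * Real.exp (-a * ω))
        (b * (Real.exp (-a * ω) * -a)) ω := by
      have hlin : HasDerivAt (fun ω : ℝ => -a * ω) (-a) ω := by
        simpa using (hasDerivAt_id ω).const_mul (-a)
      exact hlin.exp.const_mul b
    have := (h1.sub h2).sub_const (gaussianQ w0 - b * Real.exp (-a * w0))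
    refine this.congr_deriv ?_
    simp only [hg'_def]
    unfold f
    ring
  have hiff : ∀ ω : ℝ, 0 ≤ g' ω ↔ 0 ≤ (ω - w0) * (ω - (2 * a - w0)) := by
    intro ω
    have hab : a * b = (Real.sqrt (2 * Real.pi))⁻¹ * Real.exp (a * w0 - w0 ^ 2 / 2) := ab_eq w0
    have hc : 0 < (Real.sqrt (2 * Real.pi))⁻¹ := inv_pos.mpr h2π
    have key : g' ω = (Real.sqrt (2 * Real.pi))⁻¹ *
        (Real.exp (a * w0 - w0 ^ 2 / 2 + -a * ω) - Real.exp (-ω ^ 2 / 2)) := by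
      simp only [hg'_def]
      rw [hab, Real.exp_add]
      ring
    rw [key]
    rw [mul_nonneg_iff_of_pos_left hc, sub_nonneg, Real.exp_le_exp]
    constructor <;> intro h <;> nlinarith
  refine ⟨hderiv, hiff, haw, by linarith, ?_, ?_, ?_⟩
  · apply monotoneOn_of_deriv_nonneg (convex_Iic w0)
      (fun x _ => (hderiv x).differentiableAt.continuousAt.continuousWithinAt)
      (fun x _ => (hderiv x).differentiableAt.differentiableWithinAt)
    intro x hx
    rw [interior_Iic] at hx
    rw [(hderiv x).deriv, hiff]
    have hx' : x < w0 := hx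
    nlinarith [haw, ha]
  · apply antitoneOn_of_deriv_nonpos (convex_Icc w0 (2 * a - w0))
      (fun x _ => (hderiv x).differentiableAt.continuousAt.continuousWithinAt)
      (fun x _ => (hderiv x).differentiableAt.differentiableWithinAt)
    intro x hx
    rw [interior_Icc] at hx
    rw [(hderiv x).deriv]
    by_contra hlt
    push_neg at hlt
    have := (hiff x).mp hlt.le
    nlinarith [hx.1, hx.2]
  · apply monotoneOn_of_deriv_nonneg (convex_Ici (2 * a - w0))
      (fun x _ => (hderiv x).differentiableAt.continuousAt.continuousWithinAt)
      (fun x _ => (hderiv x).differentiableAt.differentiableWithinAt)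
    intro x hx
    rw [interior_Ici] at hx
    rw [(hderiv x).deriv, hiff]
    have hx' : 2 * a - w0 < x := hx
    nlinarith [haw, ha]
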